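/- For all Schwartz functions f₁,f₂,f₃,f₄ on ℝ, ∫_ℝ C^{1,1,−2}(f₁,f₂,f₄)(x) · f₃(x) dx = ∫_ℝ [ C^{1,1}(f₁,f₂)(x)·f₃(x) − C^{1,1}(f₁,f₂)(x)·H⁻f₃(x) − W(x) ] · f₄(x) dx, where W(x) = ∫_{{(ξ₁,ξ₂,ξ₃)∈ℝ³ : ξ₁+ξ₃<ξ₂ and 0<ξ₃}} f̂₁(ξ₁) f̂₂(ξ₂) f̂₃(ξ₃) e^{2πix(ξ₁+ξ₂+ξ₃)} dξ (the frequency-side expression of C^{1,1}(f₁·H⁺(f₃), f₂)(x)). -/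

import Mathlib

open MeasureTheory

/-- The trilinear semi-degenerate simplex multiplier `C^{1,1,-2}`. -/
noncomputable def C112 (f₁ f₂ f₃ : SchwartzMap ℝ ℂ) (x : ℝ) : ℂ :=
  ∫ ξ in {p : ℝ × ℝ × ℝ | p.1 < p.2.1 ∧ p.2.1 < -p.2.2 / 2},
    FourierTransform.fourier (⇑f₁) ξ.1 * FourierTransform.fourier (⇑f₂) ξ.2.1 *
      FourierTransform.fourier (⇑f₃) ξ.2.2 *
      Complex.exp ((2 : ℂ) * (Real.pi : ℂ) * Complex.I * (x : ℂ) *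
        ((ξ.1 : ℂ) + (ξ.2.1 : ℂ) + (ξ.2.2 : ℂ)))

/-- The bilinear simplex multiplier `C^{1,1}`. -/
noncomputable def C11 (f₁ f₂ : SchwartzMap ℝ ℂ) (x : ℝ) : ℂ :=
  ∫ ξ in {p : ℝ × ℝ | p.1 < p.2},
    FourierTransform.fourier (⇑f₁) ξ.1 * FourierTransform.fourier (⇑f₂) ξ.2 *
      Complex.exp ((2 : ℂ) * (Real.pi : ℂ) * Complex.I * (x : ℂ) *
        ((ξ.1 : ℂ) + (ξ.2 : ℂ)))

/-- `H⁻f(x) = ∫_{ξ ≤ 0} f̂(ξ) e^{2πixξ} dξ`. -/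
noncomputable def Hminus (f : SchwartzMap ℝ ℂ) (x : ℝ) : ℂ :=
  ∫ ξ in {ξ : ℝ | ξ ≤ 0},
    FourierTransform.fourier (⇑f) ξ *
      Complex.exp ((2 : ℂ) * (Real.pi : ℂ) * Complex.I * (x : ℂ) * (ξ : ℂ))

/-- The frequency-side expression of `C^{1,1}(f₁·H⁺(f₃), f₂)(x)`. -/
noncomputable def Wterm (f₁ f₂ f₃ : SchwartzMap ℝ ℂ) (x : ℝ) : ℂ :=
  ∫ ξ in {p : ℝ × ℝ × ℝ | p.1 + p.2.2 < p.2.1 ∧ 0 < p.2.2},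
    FourierTransform.fourier (⇑f₁) ξ.1 * FourierTransform.fourier (⇑f₂) ξ.2.1 *
      FourierTransform.fourier (⇑f₃) ξ.2.2 *
      Complex.exp ((2 : ℂ) * (Real.pi : ℂ) * Complex.I * (x : ℂ) *
        ((ξ.1 : ℂ) + (ξ.2.1 : ℂ) + (ξ.2.2 : ℂ)))

/- ======================= Auxiliary development ======================= -/

open scoped FourierTransform Real SchwartzMap

set_option maxHeartbeats 1000000

namespace C112Proof

/-- The plane-wave factor `e^{2πixt}`. -/
noncomputable def ee (x t : ℝ) : ℂ :=
  Complex.exp ((2 : ℂ) * (Real.pi : ℂ) * Complex.I * (x : ℂ) * (t : ℂ))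

lemma ee_eq (x t : ℝ) : ee x t = Complex.exp (((2 * Real.pi * x * t : ℝ) : ℂ) * Complex.I) := by
  unfold ee; congr 1; push_cast; ring

lemma norm_ee (x t : ℝ) : ‖ee x t‖ = 1 := by
  rw [ee_eq]
  simpa using Complex.norm_exp_ofReal_mul_I (2 * Real.pi * x * t)

lemma ee_add (x s t : ℝ) : ee x (s + t) = ee x s * ee x t := by
  unfold ee; rw [← Complex.exp_add]; congr 1; push_cast; ring

lemma integral_ee_mul (h : 𝓢(ℝ, ℂ)) (t : ℝ) :
    (∫ x : ℝ, ee x t * h x) = FourierTransform.fourier (⇑h) (-t) := by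
  rw [Real.fourier_eq']
  refine integral_congr_ae (Filter.Eventually.of_forall fun v => ?_)
  show ee v t * h v = _
  simp only [ee_eq, smul_eq_mul]
  congr 2
  simp only [RCLike.inner_apply, conj_trivial]
  push_cast
  ring

lemma schwartz_eq_integral (h : 𝓢(ℝ, ℂ)) (x : ℝ) :
    h x = ∫ t : ℝ, FourierTransform.fourier (⇑h) t * ee x t := by
  have hinv : 𝓕⁻ (𝓕 ⇑h) x = h x :=
    congrFun (Continuous.fourierInv_fourier_eq h.continuous h.integrable
      (by simpa [SchwartzMap.fourier_coe] using (SchwartzMap.fourierTransformCLM ℂ h).integrable)) x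
  rw [← hinv, Real.fourierInv_eq']
  refine integral_congr_ae (Filter.Eventually.of_forall fun v => ?_)
  show _ = 𝓕 (⇑h) v * ee x v
  simp only [ee_eq, smul_eq_mul]
  rw [mul_comm]
  congr 2
  simp only [RCLike.inner_apply, conj_trivial]
  push_cast
  ring

lemma integrable_triple (g₁ g₂ g₃ : 𝓢(ℝ, ℂ)) :
    Integrable (fun ξ : ℝ × ℝ × ℝ => g₁ ξ.1 * g₂ ξ.2.1 * g₃ ξ.2.2) := by
  have h23 : Integrable (fun p : ℝ × ℝ => g₂ p.1 * g₃ p.2) := by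
    rw [Measure.volume_eq_prod]
    exact (g₂.integrable (μ := volume)).mul_prod (g₃.integrable (μ := volume))
  have h := (g₁.integrable (μ := volume)).mul_prod h23
  rw [Measure.volume_eq_prod]
  simpa [mul_assoc] using h

lemma aesm_ee (x : ℝ) :
    AEStronglyMeasurable (fun ξ : ℝ × ℝ × ℝ => ee x (ξ.1 + ξ.2.1 + ξ.2.2))
      (volume : Measure (ℝ × ℝ × ℝ)) := by
  have c : Continuous fun ξ : ℝ × ℝ × ℝ => ee x (ξ.1 + ξ.2.1 + ξ.2.2) := by
    unfold ee; fun_prop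
  exact c.aestronglyMeasurable

lemma integrable_psi (g₁ g₂ g₃ : 𝓢(ℝ, ℂ)) (x : ℝ) :
    Integrable
      (fun ξ : ℝ × ℝ × ℝ => g₁ ξ.1 * g₂ ξ.2.1 * g₃ ξ.2.2 * ee x (ξ.1 + ξ.2.1 + ξ.2.2)) := by
  have h := (integrable_triple g₁ g₂ g₃).bdd_mul (aesm_ee x)
    (c := 1) (Filter.Eventually.of_forall fun ξ => le_of_eq (norm_ee _ _))
  refine h.congr (Filter.Eventually.of_forall fun ξ => ?_)
  ring

/-- The master pairing identity: pairing a frequency-side triple integral against a Schwartz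
function computes the Fourier transform at minus the total frequency. -/
lemma pairing (S : Set (ℝ × ℝ × ℝ)) (g₁ g₂ g₃ : 𝓢(ℝ, ℂ))
    (h : 𝓢(ℝ, ℂ)) :
    (∫ x : ℝ, (∫ ξ in S, g₁ ξ.1 * g₂ ξ.2.1 * g₃ ξ.2.2 * ee x (ξ.1 + ξ.2.1 + ξ.2.2)) * h x)
      = ∫ ξ in S, g₁ ξ.1 * g₂ ξ.2.1 * g₃ ξ.2.2 *
          FourierTransform.fourier (⇑h) (-(ξ.1 + ξ.2.1 + ξ.2.2)) := by
  have key : Integrable (Function.uncurry fun (x : ℝ) (ξ : ℝ × ℝ × ℝ) =>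
      g₁ ξ.1 * g₂ ξ.2.1 * g₃ ξ.2.2 * ee x (ξ.1 + ξ.2.1 + ξ.2.2) * h x)
      ((volume : Measure ℝ).prod ((volume : Measure (ℝ × ℝ × ℝ)).restrict S)) := by
    have base : Integrable
        (fun p : ℝ × (ℝ × ℝ × ℝ) => h p.1 * (g₁ p.2.1 * g₂ p.2.2.1 * g₃ p.2.2.2))
        ((volume : Measure ℝ).prod (volume : Measure (ℝ × ℝ × ℝ))) :=
      (h.integrable (μ := volume)).mul_prod (integrable_triple g₁ g₂ g₃)
    have hmeq : (volume : Measure ℝ).prod ((volume : Measure (ℝ × ℝ × ℝ)).restrict S)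
        = ((volume : Measure ℝ).prod (volume : Measure (ℝ × ℝ × ℝ))).restrict
            (Set.univ ×ˢ S) := by
      rw [← Measure.prod_restrict, Measure.restrict_univ]
    have base' : Integrable
        (fun p : ℝ × (ℝ × ℝ × ℝ) => h p.1 * (g₁ p.2.1 * g₂ p.2.2.1 * g₃ p.2.2.2))
        ((volume : Measure ℝ).prod ((volume : Measure (ℝ × ℝ × ℝ)).restrict S)) := by
      rw [hmeq]; exact base.restrict
    have haesm : AEStronglyMeasurable
        (fun p : ℝ × (ℝ × ℝ × ℝ) => ee p.1 (p.2.1 + p.2.2.1 + p.2.2.2))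
        ((volume : Measure ℝ).prod ((volume : Measure (ℝ × ℝ × ℝ)).restrict S)) := by
      have c : Continuous fun p : ℝ × (ℝ × ℝ × ℝ) => ee p.1 (p.2.1 + p.2.2.1 + p.2.2.2) := by
        unfold ee; fun_prop
      exact c.aestronglyMeasurable
    have h2 := base'.bdd_mul haesm (c := 1) (Filter.Eventually.of_forall fun p => le_of_eq (norm_ee _ _))
    refine h2.congr (Filter.Eventually.of_forall fun p => ?_)
    simp only [Function.uncurry]
    ring
  calc (∫ x : ℝ, (∫ ξ in S, g₁ ξ.1 * g₂ ξ.2.1 * g₃ ξ.2.2 * ee x (ξ.1 + ξ.2.1 + ξ.2.2)) * h x)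
      = ∫ x : ℝ, ∫ ξ in S, g₁ ξ.1 * g₂ ξ.2.1 * g₃ ξ.2.2 * ee x (ξ.1 + ξ.2.1 + ξ.2.2) * h x := by
        refine integral_congr_ae (Filter.Eventually.of_forall fun x => ?_)
        exact (integral_mul_const (h x) _).symm
    _ = ∫ ξ in S, ∫ x : ℝ, g₁ ξ.1 * g₂ ξ.2.1 * g₃ ξ.2.2 * ee x (ξ.1 + ξ.2.1 + ξ.2.2) * h x :=
        integral_integral_swap key
    _ = _ := by
        refine integral_congr_ae (Filter.Eventually.of_forall fun ξ => ?_)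
        have hx : ∀ x : ℝ, g₁ ξ.1 * g₂ ξ.2.1 * g₃ ξ.2.2 * ee x (ξ.1 + ξ.2.1 + ξ.2.2) * h x
            = g₁ ξ.1 * g₂ ξ.2.1 * g₃ ξ.2.2 * (ee x (ξ.1 + ξ.2.1 + ξ.2.2) * h x) :=
          fun x => by ring
        simp_rw [hx]
        rw [integral_const_mul, integral_ee_mul]

/- ============== The flip change of variables on ℝ³ ============== -/

lemma flip_measurable :
    Measurable fun ξ : ℝ × ℝ × ℝ => ((ξ.1, ξ.2.1, -ξ.1 - ξ.2.1 - ξ.2.2) : ℝ × ℝ × ℝ) := by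
  fun_prop

noncomputable def flipEquiv : (ℝ × ℝ × ℝ) ≃ᵐ (ℝ × ℝ × ℝ) where
  toFun ξ := (ξ.1, ξ.2.1, -ξ.1 - ξ.2.1 - ξ.2.2)
  invFun ξ := (ξ.1, ξ.2.1, -ξ.1 - ξ.2.1 - ξ.2.2)
  left_inv ξ := by
    obtain ⟨a, b, c⟩ := ξ
    simp only [Prod.mk.injEq]
    refine ⟨trivial, trivial, by ring⟩
  right_inv ξ := by
    obtain ⟨a, b, c⟩ := ξ
    simp only [Prod.mk.injEq]
    refine ⟨trivial, trivial, by ring⟩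
  measurable_toFun := flip_measurable
  measurable_invFun := flip_measurable

lemma flipEquiv_apply (ξ : ℝ × ℝ × ℝ) :
    flipEquiv ξ = ((ξ.1, ξ.2.1, -ξ.1 - ξ.2.1 - ξ.2.2) : ℝ × ℝ × ℝ) := rfl

lemma flip_mp :
    MeasurePreserving (⇑flipEquiv) (volume : Measure (ℝ × ℝ × ℝ)) volume := by
  have h1 : ∀ a : ℝ, MeasurePreserving (fun p : ℝ × ℝ => ((p.1, -a - p.1 - p.2) : ℝ × ℝ))
      (volume : Measure (ℝ × ℝ)) volume := by
    intro a
    rw [Measure.volume_eq_prod]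
    exact MeasurePreserving.skew_product (g := fun (b c : ℝ) => -a - b - c)
      (MeasurePreserving.id _) (by fun_prop)
      (Filter.Eventually.of_forall fun b =>
        (Measure.measurePreserving_sub_left volume (-a - b)).map_eq)
  have hco : ⇑flipEquiv
      = fun ξ : ℝ × ℝ × ℝ => ((ξ.1, ξ.2.1, -ξ.1 - ξ.2.1 - ξ.2.2) : ℝ × ℝ × ℝ) := rfl
  rw [hco, Measure.volume_eq_prod]
  exact MeasurePreserving.skew_product
    (g := fun (a : ℝ) (q : ℝ × ℝ) => ((q.1, -a - q.1 - q.2) : ℝ × ℝ))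
    (MeasurePreserving.id _) (by fun_prop)
    (Filter.Eventually.of_forall fun a => (h1 a).map_eq)

lemma null_plane :
    (volume : Measure (ℝ × ℝ × ℝ)) {p : ℝ × ℝ × ℝ | p.2.1 = p.1 + p.2.2} = 0 := by
  have hms : MeasurableSet {p : ℝ × ℝ × ℝ | p.2.1 = p.1 + p.2.2} :=
    measurableSet_eq_fun (by fun_prop) (by fun_prop)
  rw [Measure.volume_eq_prod, Measure.measure_prod_null hms]
  refine Filter.Eventually.of_forall fun a => ?_
  simp only [Pi.zero_apply]
  have hpre : (Prod.mk a ⁻¹' {p : ℝ × ℝ × ℝ | p.2.1 = p.1 + p.2.2})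
      = {q : ℝ × ℝ | q.1 = a + q.2} := rfl
  rw [hpre]
  have hms2 : MeasurableSet {q : ℝ × ℝ | q.1 = a + q.2} :=
    measurableSet_eq_fun (by fun_prop) (by fun_prop)
  rw [Measure.volume_eq_prod, Measure.measure_prod_null hms2]
  refine Filter.Eventually.of_forall fun b => ?_
  simp only [Pi.zero_apply]
  have hpre2 : (Prod.mk b ⁻¹' {q : ℝ × ℝ | q.1 = a + q.2}) = {c : ℝ | b = a + c} := rfl
  rw [hpre2]
  have h2 : {c : ℝ | b = a + c} = {b - a} := by
    ext c
    simp only [Set.mem_setOf_eq, Set.mem_singleton_iff]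
    constructor <;> intro h <;> linarith
  rw [h2]
  exact measure_singleton _

/- ============== Sets ============== -/

def S1 : Set (ℝ × ℝ × ℝ) := {p : ℝ × ℝ × ℝ | p.1 < p.2.1 ∧ p.2.1 < -p.2.2 / 2}
def S1' : Set (ℝ × ℝ × ℝ) := {p : ℝ × ℝ × ℝ | p.1 < p.2.1 ∧ p.2.1 < p.1 + p.2.2}
def T1 : Set (ℝ × ℝ × ℝ) := {p : ℝ × ℝ × ℝ | p.1 < p.2.1 ∧ 0 < p.2.2}
def TW : Set (ℝ × ℝ × ℝ) := {p : ℝ × ℝ × ℝ | p.1 + p.2.2 < p.2.1 ∧ 0 < p.2.2}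

lemma mem_S1 {p : ℝ × ℝ × ℝ} : p ∈ S1 ↔ p.1 < p.2.1 ∧ p.2.1 < -p.2.2 / 2 := Iff.rfl
lemma mem_S1' {p : ℝ × ℝ × ℝ} : p ∈ S1' ↔ p.1 < p.2.1 ∧ p.2.1 < p.1 + p.2.2 := Iff.rfl
lemma mem_T1 {p : ℝ × ℝ × ℝ} : p ∈ T1 ↔ p.1 < p.2.1 ∧ 0 < p.2.2 := Iff.rfl
lemma mem_TW {p : ℝ × ℝ × ℝ} : p ∈ TW ↔ p.1 + p.2.2 < p.2.1 ∧ 0 < p.2.2 := Iff.rfl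

lemma meas_S1 : MeasurableSet S1 := by
  unfold S1
  simp only [Set.setOf_and]
  exact (measurableSet_lt (by fun_prop) (by fun_prop)).inter
    (measurableSet_lt (by fun_prop) (by fun_prop))

lemma meas_T1 : MeasurableSet T1 := by
  unfold T1
  simp only [Set.setOf_and]
  exact (measurableSet_lt (by fun_prop) (by fun_prop)).inter
    (measurableSet_lt (by fun_prop) (by fun_prop))

lemma meas_TW : MeasurableSet TW := by
  unfold TW
  simp only [Set.setOf_and]
  exact (measurableSet_lt (by fun_prop) (by fun_prop)).inter
    (measurableSet_lt (by fun_prop) (by fun_prop))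

lemma TW_subset_T1 : TW ⊆ T1 := by
  rintro p ⟨h1, h2⟩
  exact ⟨by linarith, h2⟩

end C112Proof

/- ======================= Main proof ======================= -/

open C112Proof

/-- The 3-adjoint identity
`∫ C^{1,1,−2}(f₁,f₂,f₄)·f₃ = ∫ [C^{1,1}(f₁,f₂)·f₃ − C^{1,1}(f₁,f₂)·H⁻f₃ − C^{1,1}(f₁·H⁺f₃,f₂)]·f₄`. -/
theorem C112_third_adjoint (f₁ f₂ f₃ f₄ : SchwartzMap ℝ ℂ) :
    (∫ x : ℝ, C112 f₁ f₂ f₄ x * f₃ x) =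
      ∫ x : ℝ,
        (C11 f₁ f₂ x * f₃ x - C11 f₁ f₂ x * Hminus f₃ x - Wterm f₁ f₂ f₃ x) * f₄ x := by
  classical
  -- Step 1 : compute the LHS by pairing
  have hC112 : ∀ x : ℝ, C112 f₁ f₂ f₄ x
      = ∫ ξ in S1, FourierTransform.fourier (⇑f₁) ξ.1 * FourierTransform.fourier (⇑f₂) ξ.2.1 *
          FourierTransform.fourier (⇑f₄) ξ.2.2 * ee x (ξ.1 + ξ.2.1 + ξ.2.2) := by
    intro x
    refine integral_congr_ae (Filter.Eventually.of_forall fun ξ => ?_)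
    beta_reduce
    congr 1
    unfold ee
    congr 1
    push_cast
    ring
  have hLHS : (∫ x : ℝ, C112 f₁ f₂ f₄ x * f₃ x)
      = ∫ ξ in S1, FourierTransform.fourier (⇑f₁) ξ.1 * FourierTransform.fourier (⇑f₂) ξ.2.1 *
          FourierTransform.fourier (⇑f₄) ξ.2.2 *
          FourierTransform.fourier (⇑f₃) (-(ξ.1 + ξ.2.1 + ξ.2.2)) := by
    have hp := pairing S1 (SchwartzMap.fourierTransformCLM ℂ f₁)
      (SchwartzMap.fourierTransformCLM ℂ f₂) (SchwartzMap.fourierTransformCLM ℂ f₄) f₃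
    simp only [SchwartzMap.fourierTransformCLM_apply, SchwartzMap.fourier_coe] at hp
    rw [← hp]
    refine integral_congr_ae (Filter.Eventually.of_forall fun x => ?_)
    beta_reduce
    rw [hC112 x]
  -- Step 2 : compute the RHS integrand as a single frequency integral
  have hHp : ∀ x : ℝ, f₃ x - Hminus f₃ x
      = ∫ t in {t : ℝ | 0 < t}, FourierTransform.fourier (⇑f₃) t * ee x t := by
    intro x
    have hint : Integrable (fun t : ℝ => FourierTransform.fourier (⇑f₃) t * ee x t) := by
      have caesm : AEStronglyMeasurable (fun t : ℝ => ee x t) (volume : Measure ℝ) := by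
        have c : Continuous fun t : ℝ => ee x t := by unfold ee; fun_prop
        exact c.aestronglyMeasurable
      have h0 := ((SchwartzMap.fourierTransformCLM ℂ f₃).integrable (μ := volume)).bdd_mul
        caesm (c := 1) (Filter.Eventually.of_forall fun t => le_of_eq (norm_ee _ _))
      simp only [SchwartzMap.fourierTransformCLM_apply, SchwartzMap.fourier_coe] at h0
      exact h0.congr (Filter.Eventually.of_forall fun t => mul_comm _ _)
    have hinv : f₃ x = ∫ t : ℝ, FourierTransform.fourier (⇑f₃) t * ee x t :=
      schwartz_eq_integral f₃ x
    have hcompl : ({t : ℝ | t ≤ 0})ᶜ = {t : ℝ | 0 < t} := by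
      ext t; simp [not_le]
    have hsplit := integral_add_compl
      (show MeasurableSet {t : ℝ | t ≤ 0} from measurableSet_Iic) hint
    rw [hcompl] at hsplit
    have hm : Hminus f₃ x = ∫ t in {t : ℝ | t ≤ 0}, FourierTransform.fourier (⇑f₃) t * ee x t := rfl
    rw [hinv, hm, ← hsplit]
    ring
  have hC11x : ∀ x : ℝ, C11 f₁ f₂ x
      = ∫ p in {p : ℝ × ℝ | p.1 < p.2}, FourierTransform.fourier (⇑f₁) p.1 *
          FourierTransform.fourier (⇑f₂) p.2 * ee x (p.1 + p.2) := by
    intro x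
    refine integral_congr_ae (Filter.Eventually.of_forall fun p => ?_)
    beta_reduce
    congr 1
    unfold ee
    congr 1
    push_cast
    ring
  have happ : ∀ z : (ℝ × ℝ) × ℝ,
      (MeasurableEquiv.prodAssoc z : ℝ × ℝ × ℝ) = (z.1.1, z.1.2, z.2) := fun _ => rfl
  have hpre : (MeasurableEquiv.prodAssoc ⁻¹' T1 : Set ((ℝ × ℝ) × ℝ))
      = {p : ℝ × ℝ | p.1 < p.2} ×ˢ {t : ℝ | 0 < t} := by
    ext z
    simp only [Set.mem_preimage, happ, mem_T1, Set.mem_prod, Set.mem_setOf_eq]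
  have hC11Hp : ∀ x : ℝ,
      C11 f₁ f₂ x * (∫ t in {t : ℝ | 0 < t}, FourierTransform.fourier (⇑f₃) t * ee x t)
      = ∫ ξ in T1, FourierTransform.fourier (⇑f₁) ξ.1 * FourierTransform.fourier (⇑f₂) ξ.2.1 *
          FourierTransform.fourier (⇑f₃) ξ.2.2 * ee x (ξ.1 + ξ.2.1 + ξ.2.2) := by
    intro x
    rw [hC11x x]
    rw [← setIntegral_prod_mul
      (fun p : ℝ × ℝ => FourierTransform.fourier (⇑f₁) p.1 *
        FourierTransform.fourier (⇑f₂) p.2 * ee x (p.1 + p.2))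
      (fun t : ℝ => FourierTransform.fourier (⇑f₃) t * ee x t) _ _]
    rw [← Measure.volume_eq_prod, ← hpre]
    rw [show (∫ z in (MeasurableEquiv.prodAssoc ⁻¹' T1 : Set ((ℝ × ℝ) × ℝ)),
          FourierTransform.fourier (⇑f₁) z.1.1 * FourierTransform.fourier (⇑f₂) z.1.2 *
            ee x (z.1.1 + z.1.2) * (FourierTransform.fourier (⇑f₃) z.2 * ee x z.2))
        = ∫ z in (MeasurableEquiv.prodAssoc ⁻¹' T1 : Set ((ℝ × ℝ) × ℝ)),
          (fun ξ : ℝ × ℝ × ℝ => FourierTransform.fourier (⇑f₁) ξ.1 *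
            FourierTransform.fourier (⇑f₂) ξ.2.1 * FourierTransform.fourier (⇑f₃) ξ.2.2 *
            ee x (ξ.1 + ξ.2.1 + ξ.2.2)) (MeasurableEquiv.prodAssoc z) from by
      refine integral_congr_ae (Filter.Eventually.of_forall fun z => ?_)
      beta_reduce
      simp only [happ, ee_add]
      ring]
    exact MeasurePreserving.setIntegral_preimage_emb
      (MeasureTheory.volume_preserving_prodAssoc)
      MeasurableEquiv.prodAssoc.measurableEmbedding
      (fun ξ : ℝ × ℝ × ℝ => FourierTransform.fourier (⇑f₁) ξ.1 *
        FourierTransform.fourier (⇑f₂) ξ.2.1 * FourierTransform.fourier (⇑f₃) ξ.2.2 *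
        ee x (ξ.1 + ξ.2.1 + ξ.2.2)) T1
  have hWx : ∀ x : ℝ, Wterm f₁ f₂ f₃ x
      = ∫ ξ in TW, FourierTransform.fourier (⇑f₁) ξ.1 * FourierTransform.fourier (⇑f₂) ξ.2.1 *
          FourierTransform.fourier (⇑f₃) ξ.2.2 * ee x (ξ.1 + ξ.2.1 + ξ.2.2) := by
    intro x
    refine integral_congr_ae (Filter.Eventually.of_forall fun ξ => ?_)
    beta_reduce
    congr 1
    unfold ee
    congr 1
    push_cast
    ring
  have hpsi : ∀ x : ℝ, Integrable
      (fun ξ : ℝ × ℝ × ℝ => FourierTransform.fourier (⇑f₁) ξ.1 *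
        FourierTransform.fourier (⇑f₂) ξ.2.1 * FourierTransform.fourier (⇑f₃) ξ.2.2 *
        ee x (ξ.1 + ξ.2.1 + ξ.2.2)) := by
    intro x
    have h0 := integrable_psi (SchwartzMap.fourierTransformCLM ℂ f₁)
      (SchwartzMap.fourierTransformCLM ℂ f₂) (SchwartzMap.fourierTransformCLM ℂ f₃) x
    simpa only [SchwartzMap.fourierTransformCLM_apply, SchwartzMap.fourier_coe] using h0
  have hcomb : ∀ x : ℝ,
      C11 f₁ f₂ x * f₃ x - C11 f₁ f₂ x * Hminus f₃ x - Wterm f₁ f₂ f₃ x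
      = ∫ ξ in T1 \ TW, FourierTransform.fourier (⇑f₁) ξ.1 * FourierTransform.fourier (⇑f₂) ξ.2.1 *
          FourierTransform.fourier (⇑f₃) ξ.2.2 * ee x (ξ.1 + ξ.2.1 + ξ.2.2) := by
    intro x
    have hd := integral_diff (μ := (volume : Measure (ℝ × ℝ × ℝ))) meas_TW
      ((hpsi x).integrableOn) TW_subset_T1
    calc C11 f₁ f₂ x * f₃ x - C11 f₁ f₂ x * Hminus f₃ x - Wterm f₁ f₂ f₃ x
        = C11 f₁ f₂ x * (f₃ x - Hminus f₃ x) - Wterm f₁ f₂ f₃ x := by ring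
      _ = (∫ ξ in T1, FourierTransform.fourier (⇑f₁) ξ.1 * FourierTransform.fourier (⇑f₂) ξ.2.1 *
            FourierTransform.fourier (⇑f₃) ξ.2.2 * ee x (ξ.1 + ξ.2.1 + ξ.2.2))
          - ∫ ξ in TW, FourierTransform.fourier (⇑f₁) ξ.1 * FourierTransform.fourier (⇑f₂) ξ.2.1 *
            FourierTransform.fourier (⇑f₃) ξ.2.2 * ee x (ξ.1 + ξ.2.1 + ξ.2.2) := by
            rw [hHp x, hC11Hp x, hWx x]
      _ = _ := hd.symm
  have hRHS : (∫ x : ℝ,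
        (C11 f₁ f₂ x * f₃ x - C11 f₁ f₂ x * Hminus f₃ x - Wterm f₁ f₂ f₃ x) * f₄ x)
      = ∫ ξ in T1 \ TW, FourierTransform.fourier (⇑f₁) ξ.1 * FourierTransform.fourier (⇑f₂) ξ.2.1 *
          FourierTransform.fourier (⇑f₃) ξ.2.2 *
          FourierTransform.fourier (⇑f₄) (-(ξ.1 + ξ.2.1 + ξ.2.2)) := by
    have hp := pairing (T1 \ TW) (SchwartzMap.fourierTransformCLM ℂ f₁)
      (SchwartzMap.fourierTransformCLM ℂ f₂) (SchwartzMap.fourierTransformCLM ℂ f₃) f₄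
    simp only [SchwartzMap.fourierTransformCLM_apply, SchwartzMap.fourier_coe] at hp
    rw [← hp]
    refine integral_congr_ae (Filter.Eventually.of_forall fun x => ?_)
    beta_reduce
    rw [hcomb x]
  -- Step 3 : change of variables and a.e. set identification
  set K₁ : ℝ × ℝ × ℝ → ℂ := fun ξ =>
    FourierTransform.fourier (⇑f₁) ξ.1 * FourierTransform.fourier (⇑f₂) ξ.2.1 *
      FourierTransform.fourier (⇑f₄) ξ.2.2 *
      FourierTransform.fourier (⇑f₃) (-(ξ.1 + ξ.2.1 + ξ.2.2)) with hK₁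
  set K₂ : ℝ × ℝ × ℝ → ℂ := fun ξ =>
    FourierTransform.fourier (⇑f₁) ξ.1 * FourierTransform.fourier (⇑f₂) ξ.2.1 *
      FourierTransform.fourier (⇑f₃) ξ.2.2 *
      FourierTransform.fourier (⇑f₄) (-(ξ.1 + ξ.2.1 + ξ.2.2)) with hK₂
  have hflip : (∫ ξ in S1, K₁ ξ) = ∫ ξ : ℝ × ℝ × ℝ, S1.indicator K₁ (flipEquiv ξ) := by
    rw [flip_mp.integral_comp flipEquiv.measurableEmbedding, integral_indicator meas_S1]
  have hpt : ∀ ξ : ℝ × ℝ × ℝ, S1.indicator K₁ (flipEquiv ξ) = S1'.indicator K₂ ξ := by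
    intro ξ
    by_cases hmem : ξ ∈ S1'
    · obtain ⟨h1, h2⟩ := mem_S1'.1 hmem
      have hin : flipEquiv ξ ∈ S1 := by
        rw [flipEquiv_apply]
        refine mem_S1.2 ⟨h1, ?_⟩
        show ξ.2.1 < -(-ξ.1 - ξ.2.1 - ξ.2.2) / 2
        linarith
      rw [Set.indicator_of_mem hin, Set.indicator_of_mem hmem]
      rw [flipEquiv_apply, hK₁, hK₂]
      show FourierTransform.fourier (⇑f₁) ξ.1 * FourierTransform.fourier (⇑f₂) ξ.2.1 *
            FourierTransform.fourier (⇑f₄) (-ξ.1 - ξ.2.1 - ξ.2.2) *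
            FourierTransform.fourier (⇑f₃) (-(ξ.1 + ξ.2.1 + (-ξ.1 - ξ.2.1 - ξ.2.2)))
          = FourierTransform.fourier (⇑f₁) ξ.1 * FourierTransform.fourier (⇑f₂) ξ.2.1 *
            FourierTransform.fourier (⇑f₃) ξ.2.2 *
            FourierTransform.fourier (⇑f₄) (-(ξ.1 + ξ.2.1 + ξ.2.2))
      rw [show -(ξ.1 + ξ.2.1 + (-ξ.1 - ξ.2.1 - ξ.2.2)) = ξ.2.2 from by ring,
        show -ξ.1 - ξ.2.1 - ξ.2.2 = -(ξ.1 + ξ.2.1 + ξ.2.2) from by ring]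
      ring
    · have hnin : flipEquiv ξ ∉ S1 := by
        intro hc
        rw [flipEquiv_apply] at hc
        obtain ⟨h1, h2⟩ := mem_S1.1 hc
        have h2' : ξ.2.1 < -(-ξ.1 - ξ.2.1 - ξ.2.2) / 2 := h2
        exact hmem (mem_S1'.2 ⟨h1, by linarith⟩)
      rw [Set.indicator_of_notMem hnin, Set.indicator_of_notMem hmem]
  have hae : (∫ ξ : ℝ × ℝ × ℝ, S1'.indicator K₂ ξ)
      = ∫ ξ : ℝ × ℝ × ℝ, (T1 \ TW).indicator K₂ ξ := by
    have hne : ∀ᵐ ξ : ℝ × ℝ × ℝ, ¬ (ξ.2.1 = ξ.1 + ξ.2.2) := by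
      rw [ae_iff]
      simp only [not_not]
      exact null_plane
    refine integral_congr_ae ?_
    filter_upwards [hne] with ξ hξ
    have hiff : ξ ∈ S1' ↔ ξ ∈ T1 \ TW := by
      constructor
      · intro h
        obtain ⟨h1, h2⟩ := mem_S1'.1 h
        refine ⟨mem_T1.2 ⟨h1, by linarith⟩, fun hc => ?_⟩
        obtain ⟨h3, _⟩ := mem_TW.1 hc
        linarith
      · rintro ⟨ht, hw⟩
        obtain ⟨h1, h2⟩ := mem_T1.1 ht
        have h4 : ¬ (ξ.1 + ξ.2.2 < ξ.2.1) := fun hc => hw (mem_TW.2 ⟨hc, h2⟩)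
        rcases (not_lt.1 h4).lt_or_eq with h5 | h5
        · exact mem_S1'.2 ⟨h1, h5⟩
        · exact absurd h5 hξ
    by_cases h : ξ ∈ S1'
    · rw [Set.indicator_of_mem h, Set.indicator_of_mem (hiff.1 h)]
    · rw [Set.indicator_of_notMem h,
        Set.indicator_of_notMem (fun hc => h (hiff.2 hc))]
  calc (∫ x : ℝ, C112 f₁ f₂ f₄ x * f₃ x)
      = ∫ ξ in S1, K₁ ξ := hLHS
    _ = ∫ ξ : ℝ × ℝ × ℝ, S1.indicator K₁ (flipEquiv ξ) := hflip
    _ = ∫ ξ : ℝ × ℝ × ℝ, S1'.indicator K₂ ξ := by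
        refine integral_congr_ae (Filter.Eventually.of_forall fun ξ => ?_)
        exact hpt ξ
    _ = ∫ ξ : ℝ × ℝ × ℝ, (T1 \ TW).indicator K₂ ξ := hae
    _ = ∫ ξ in T1 \ TW, K₂ ξ := integral_indicator (meas_T1.diff meas_TW)
    _ = _ := hRHS.symm
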